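/- Let f : A → B be a homomorphism of commutative rings such that (1) the induced homomorphism A ⊗_ℤ ℚ → B ⊗_ℤ ℚ is an isomorphism, and (2) for every prime number p, the induced homomorphism between the localizations of A and of B at the multiplicative set of nonzero integers coprime to p is an F_p-isomorphism. Then for every algebraically closed field K, the map from ring homomorphisms B → K to ring homomorphisms A → K given by precomposition with f is a bijection. -/

import Mathlib

/-- The multiplicative set of integers coprime to `p` (for `p` prime these are exactly the
nonzero integers coprime to `p`). -/
def intCoprime (p : ℕ) : Submonoid ℤ where
  carrier := {n : ℤ | IsCoprime n (p : ℤ)}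
  one_mem' := isCoprime_one_left
  mul_mem' := fun ha hb => IsCoprime.mul_left ha hb

/-- The image in a commutative ring `A` of the multiplicative set of integers coprime to `p`. -/
def intCoprimeIn (p : ℕ) (A : Type*) [CommRing A] : Submonoid A :=
  (intCoprime p).map (Int.castRingHom A).toMonoidHom

/-- The localization of `A` at the multiplicative set of (nonzero) integers coprime to `p`,
i.e. `A ⊗_ℤ ℤ₍ₚ₎`. -/
abbrev LocAt (p : ℕ) (A : Type*) [CommRing A] := Localization (intCoprimeIn p A)

/-- The homomorphism between the localizations at `p` induced by `f : A →+* B`. -/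
noncomputable def locMap (p : ℕ) {A B : Type*} [CommRing A] [CommRing B] (f : A →+* B) :
    LocAt p A →+* LocAt p B :=
  IsLocalization.map (M := intCoprimeIn p A) (T := intCoprimeIn p B)
      (Localization (intCoprimeIn p B)) f
    (by
      intro a ha
      obtain ⟨n, hn, rfl⟩ := (Submonoid.mem_map (f := (Int.castRingHom A).toMonoidHom)).mp ha
      exact Submonoid.mem_comap.mpr
        ((Submonoid.mem_map (f := (Int.castRingHom B).toMonoidHom)).mpr ⟨n, hn, by simp⟩))

/-- A ring homomorphism `g : R →+* S` is an `F_p`-isomorphism if every element of its kernel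
is nilpotent and for every `s : S` some `p`-power `s ^ (p ^ m)` lies in the image of `g`. -/
def IsFpIso (p : ℕ) {R S : Type*} [CommRing R] [CommRing S] (g : R →+* S) : Prop :=
  (∀ x ∈ RingHom.ker g, IsNilpotent x) ∧ ∀ s : S, ∃ m : ℕ, s ^ p ^ m ∈ Set.range g

section FpBij

variable {p : ℕ} {R S K : Type*} [CommRing R] [CommRing S] [Field K]

private lemma ppow_ppow {M : Type*} [Monoid M] (a : M) (q m n : ℕ) :
    (a ^ q ^ m) ^ q ^ n = a ^ q ^ (m + n) := by
  rw [← pow_mul, ← pow_add]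

private lemma ppow_inj (hp : p.Prime) [CharP K p] {m : ℕ} {x y : K}
    (h : x ^ p ^ m = y ^ p ^ m) : x = y := by
  haveI := Fact.mk hp
  exact iterateFrobenius_inj K p m (by simpa [iterateFrobenius_def] using h)

private lemma phi_eq_zero_of_mul (hp : p.Prime) [CharP K p] {g : R →+* S} (hg : IsFpIso p g)
    (φ : R →+* K) {r : R} {c : S} (h : g r = p * c) : φ r = 0 := by
  obtain ⟨M, d, hd⟩ := hg.2 c
  have hker : g (r ^ p ^ M - (p : R) ^ p ^ M * d) = 0 := by
    rw [map_sub, map_pow, h, mul_pow, map_mul, map_pow, map_natCast, hd, sub_self]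
  have h0 : φ (r ^ p ^ M - (p : R) ^ p ^ M * d) = 0 :=
    ((hg.1 _ hker).map φ).eq_zero
  rw [map_sub, map_mul, map_pow, map_pow, map_natCast, sub_eq_zero,
    CharP.cast_eq_zero K p, zero_pow (pow_pos hp.pos M).ne', zero_mul] at h0
  exact pow_eq_zero_iff (pow_pos hp.pos M).ne' |>.mp h0

private lemma fpIso_bij (hp : p.Prime) [CharP K p] [IsAlgClosed K] {g : R →+* S}
    (hg : IsFpIso p g) :
    Function.Bijective (fun ψ : S →+* K => ψ.comp g) := by
  haveI := Fact.mk hp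
  constructor
  · intro ψ₁ ψ₂ hc
    ext s
    obtain ⟨m, r, hr⟩ := hg.2 s
    apply ppow_inj hp (m := m)
    rw [← map_pow, ← map_pow, ← hr]
    exact RingHom.congr_fun hc r
  · intro φ
    have hsurj : ∀ (m : ℕ) (x : K), ∃ y : K, y ^ p ^ m = x := by
      intro m x
      obtain ⟨y, hy⟩ := (bijective_iterateFrobenius K p m).2 x
      exact ⟨y, by rwa [iterateFrobenius_def] at hy⟩
    choose root hroot using hsurj
    set ψ0 : S → K := fun s => root (hg.2 s).choose (φ (hg.2 s).choose_spec.choose) with hψ0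
    have hchar : ∀ (s : S) (m : ℕ) (r : R), g r = s ^ p ^ m → ψ0 s ^ p ^ m = φ r := by
      intro s m r hr
      have hr₀ : g (hg.2 s).choose_spec.choose = s ^ p ^ (hg.2 s).choose :=
        (hg.2 s).choose_spec.choose_spec
      set m₀ := (hg.2 s).choose
      set r₀ := (hg.2 s).choose_spec.choose
      have base : ψ0 s ^ p ^ m₀ = φ r₀ := hroot _ _
      have hmid : φ (r₀ ^ p ^ m) = φ (r ^ p ^ m₀) := by
        rw [← sub_eq_zero, ← map_sub]
        apply phi_eq_zero_of_mul hp hg φ (c := 0)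
        rw [map_sub, map_pow, map_pow, hr₀, hr, ppow_ppow, ppow_ppow, add_comm m₀ m,
          sub_self, mul_zero]
      apply ppow_inj hp (m := m₀)
      calc (ψ0 s ^ p ^ m) ^ p ^ m₀ = (ψ0 s ^ p ^ m₀) ^ p ^ m := by
            rw [ppow_ppow, ppow_ppow, add_comm m₀ m]
        _ = φ (r₀ ^ p ^ m) := by rw [base, map_pow]
        _ = φ (r ^ p ^ m₀) := hmid
        _ = φ r ^ p ^ m₀ := by rw [map_pow]
    have hone : ψ0 1 = 1 := by
      have h := hchar 1 0 1 (by simp)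
      simpa using h
    have hmul : ∀ s t, ψ0 (s * t) = ψ0 s * ψ0 t := by
      intro s t
      obtain ⟨m, r, hr⟩ := hg.2 s
      obtain ⟨n, r', hr'⟩ := hg.2 t
      have h1 : g (r ^ p ^ n * r' ^ p ^ m) = (s * t) ^ p ^ (m + n) := by
        rw [map_mul, map_pow, map_pow, hr, hr', ppow_ppow, ppow_ppow, add_comm n m, ← mul_pow]
      apply ppow_inj hp (m := m + n)
      rw [hchar (s * t) (m + n) _ h1, map_mul, map_pow, map_pow,
        ← hchar s m r hr, ← hchar t n r' hr', mul_pow, ppow_ppow, ppow_ppow, add_comm n m]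
    have hadd : ∀ s t, ψ0 (s + t) = ψ0 s + ψ0 t := by
      intro s t
      obtain ⟨m, r, hr⟩ := hg.2 s
      obtain ⟨n, r', hr'⟩ := hg.2 t
      obtain ⟨N, r'', hr''⟩ := hg.2 (s + t)
      obtain ⟨w, hw⟩ := exists_add_pow_prime_pow_eq hp s t (m + (n + N))
      have h1 : g (r'' ^ p ^ (m + n)) = (s + t) ^ p ^ (m + (n + N)) := by
        rw [map_pow, hr'', ppow_ppow, show N + (m + n) = m + (n + N) by ring]
      have h2 : g (r ^ p ^ (n + N)) = s ^ p ^ (m + (n + N)) := by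
        rw [map_pow, hr, ppow_ppow]
      have h3 : g (r' ^ p ^ (m + N)) = t ^ p ^ (m + (n + N)) := by
        rw [map_pow, hr', ppow_ppow, show n + (m + N) = m + (n + N) by ring]
      have hgD : g (r'' ^ p ^ (m + n) - r ^ p ^ (n + N) - r' ^ p ^ (m + N)) = p * (s * t * w) := by
        rw [map_sub, map_sub, h1, h2, h3, hw]
        ring
      have hD := phi_eq_zero_of_mul hp hg φ hgD
      rw [map_sub, map_sub] at hD
      apply ppow_inj hp (m := m + (n + N))
      rw [hchar (s + t) _ _ h1, add_pow_char_pow, hchar s _ _ h2, hchar t _ _ h3]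
      linear_combination hD
    refine ⟨RingHom.mk' ⟨⟨ψ0, hone⟩, hmul⟩ hadd, ?_⟩
    ext r
    have h := hchar (g r) 0 r (by simp)
    simp at h
    exact h

end FpBij

section LocBij

variable {A B : Type*} [CommRing A] [CommRing B]

private lemma bij_comp_algMap (p : ℕ) (hp : p.Prime) (K : Type*) [Field K] [CharP K p] :
    Function.Bijective
      (fun g : LocAt p B →+* K => g.comp (algebraMap B (LocAt p B))) := by
  constructor
  · intro g1 g2 h
    exact IsLocalization.ringHom_ext (intCoprimeIn p B) h
  · intro h
    have hu : ∀ y : intCoprimeIn p B, IsUnit (h y) := by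
      rintro ⟨y, hy⟩
      obtain ⟨n, hn, rfl⟩ := hy
      obtain ⟨a, b, hab⟩ := hn
      have hv : h ((Int.castRingHom B).toMonoidHom n) = (n : K) := by
        simp
      rw [hv]
      refine IsUnit.of_mul_eq_one (a : K) ?_
      have hc := congrArg (fun z : ℤ => (z : K)) hab
      push_cast at hc
      rw [CharP.cast_eq_zero K p] at hc
      linear_combination hc
    exact ⟨IsLocalization.lift hu, RingHom.ext fun b => IsLocalization.lift_eq hu b⟩

private lemma locMap_comp_alg (p : ℕ) (f : A →+* B) :
    (locMap p f).comp (algebraMap A (LocAt p A)) = (algebraMap B (LocAt p B)).comp f :=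
  IsLocalization.map_comp _

end LocBij

/-- If `f : A → B` is a ring homomorphism which is a rational isomorphism (after tensoring
with `ℚ` over `ℤ`) and an `F_p`-isomorphism after localizing at every prime `p`, then
precomposition with `f` is a bijection on ring homomorphisms into any algebraically
closed field: `f` is a `V`-isomorphism. -/
theorem bijective_comp_of_rational_iso_and_Fp_iso {A B : Type*} [CommRing A] [CommRing B]
    (f : A →+* B)
    (hQ : Function.Bijective
      (Algebra.TensorProduct.map (AlgHom.id ℤ ℚ) (f.toIntAlgHom) :
        TensorProduct ℤ ℚ A →ₐ[ℤ] TensorProduct ℤ ℚ B))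
    (hp : ∀ p : ℕ, p.Prime → IsFpIso p (locMap p f)) :
    ∀ (K : Type*) [Field K] [IsAlgClosed K],
      Function.Bijective (fun g : B →+* K => g.comp f) := by
  intro K _ _
  haveI : CharP K (ringChar K) := ringChar.charP K
  rcases CharP.char_is_prime_or_zero K (ringChar K) with hpr | h0
  · -- positive characteristic case
    set q := ringChar K with hq
    have hb1 := bij_comp_algMap (B := B) q hpr K
    have hb2 := bij_comp_algMap (B := A) q hpr K
    have hbF := fpIso_bij (K := K) hpr (hp q hpr)
    have hsq : (fun g : B →+* K => g.comp f) ∘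
          (fun g : LocAt q B →+* K => g.comp (algebraMap B (LocAt q B)))
        = (fun g : LocAt q A →+* K => g.comp (algebraMap A (LocAt q A))) ∘
          (fun ψ : LocAt q B →+* K => ψ.comp (locMap q f)) := by
      funext ψ
      simp only [Function.comp_apply, RingHom.comp_assoc, locMap_comp_alg q f]
    have hcb : Function.Bijective ((fun g : B →+* K => g.comp f) ∘
        (fun g : LocAt q B →+* K => g.comp (algebraMap B (LocAt q B)))) := by
      rw [hsq]
      exact hb2.comp hbF
    exact (Function.Bijective.of_comp_iff _ hb1).mp hcb
  · -- characteristic zero case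
    haveI : CharP K 0 := h0 ▸ ringChar.charP K
    haveI : CharZero K := CharP.charP_to_charZero K
    set qK : ℚ →ₐ[ℤ] K := (algebraMap ℚ K).toIntAlgHom with hqK
    set E := (Algebra.TensorProduct.map (AlgHom.id ℤ ℚ) f.toIntAlgHom) with hE
    constructor
    · intro ψ₁ ψ₂ hc
      simp only at hc
      have lift_comp : ∀ ψ : B →+* K,
          (Algebra.TensorProduct.lift qK ψ.toIntAlgHom (fun _ _ => Commute.all _ _)).comp E
          = Algebra.TensorProduct.lift qK (ψ.comp f).toIntAlgHom
              (fun _ _ => Commute.all _ _) := by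
        intro ψ
        ext x
        · simp [hE, hqK]
        · simp [hE, hqK]
      have heq : (Algebra.TensorProduct.lift qK ψ₁.toIntAlgHom (fun _ _ => Commute.all _ _)).comp E
          = (Algebra.TensorProduct.lift qK ψ₂.toIntAlgHom (fun _ _ => Commute.all _ _)).comp E := by
        rw [lift_comp ψ₁, lift_comp ψ₂, hc]
      ext b
      obtain ⟨x, hx⟩ := hQ.2 ((1 : ℚ) ⊗ₜ[ℤ] b)
      have h1 : ∀ ψ : B →+* K,
          Algebra.TensorProduct.lift qK ψ.toIntAlgHom (fun _ _ => Commute.all _ _)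
            ((1 : ℚ) ⊗ₜ[ℤ] b) = ψ b := by
        intro ψ
        simp [Algebra.TensorProduct.lift_tmul, hqK]
      have h2 := congrArg (fun F : TensorProduct ℤ ℚ A →ₐ[ℤ] K => F x) heq
      simp only [AlgHom.comp_apply] at h2
      rw [hx, h1, h1] at h2
      exact h2
    · intro φ
      set Φ := Algebra.TensorProduct.lift qK φ.toIntAlgHom (fun _ _ => Commute.all _ _) with hΦ
      set e := AlgEquiv.ofBijective E hQ with he
      refine ⟨Φ.toRingHom.comp ((e.symm.toAlgHom.toRingHom).comp
          (Algebra.TensorProduct.includeRight.toRingHom)), ?_⟩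
      ext a
      have hea : e ((1 : ℚ) ⊗ₜ[ℤ] a) = (1 : ℚ) ⊗ₜ[ℤ] (f a) := by
        simp [he, hE, AlgEquiv.coe_ofBijective]
      have hsymm : e.symm ((1 : ℚ) ⊗ₜ[ℤ] (f a)) = (1 : ℚ) ⊗ₜ[ℤ] a := by
        rw [← hea, AlgEquiv.symm_apply_apply]
      simp [hΦ, hsymm, Algebra.TensorProduct.lift_tmul, hqK]
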